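/- There exists a binary linear code C ⊆ F_2^5 satisfying C^{⋆2} = C + C^⊥ that is not triorthogonal. Specifically, the code C spanned by (1,1,0,0,0), (0,1,1,0,0), (0,0,0,1,1) satisfies C^{⋆2} = C + C^⊥, but C admits no triorthogonal generator matrix. -/

import Mathlib

open Matrix

private lemma zmod2_mul_self : ∀ t : ZMod 2, t * t = t := by decide

private lemma dot_zero_of_even {n : ℕ} {u v : Fin n → ZMod 2}
    (h : Even (hammingNorm (u * v))) : dotProduct u v = 0 := by
  have key : dotProduct u v = ((hammingNorm (u * v) : ℕ) : ZMod 2) := by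
    rw [hammingNorm, Finset.card_filter, Nat.cast_sum, dotProduct]
    apply Finset.sum_congr rfl
    intro i _
    have h2 : ∀ t : ZMod 2, t = ((if t ≠ 0 then 1 else 0 : ℕ) : ZMod 2) := by decide
    simpa using h2 ((u * v) i)
  rw [key, ZMod.natCast_eq_zero_iff]
  exact h.two_dvd

private lemma dot_span_zero {n : ℕ} (u : Fin n → ZMod 2) (s : Set (Fin n → ZMod 2))
    (h : ∀ x ∈ s, dotProduct u x = 0) :
    ∀ c ∈ Submodule.span (ZMod 2) s, dotProduct u c = 0 := by
  intro c hc
  induction hc using Submodule.span_induction with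
  | mem x hx => exact h x hx
  | zero => simp
  | add x y _ _ hx hy => simp [dotProduct_add, hx, hy]
  | smul r x _ hx => simp [dotProduct_smul, hx]

private lemma dot_span_zero_left {n : ℕ} (u : Fin n → ZMod 2) (s : Set (Fin n → ZMod 2))
    (h : ∀ x ∈ s, dotProduct x u = 0) :
    ∀ c ∈ Submodule.span (ZMod 2) s, dotProduct c u = 0 := by
  intro c hc
  induction hc using Submodule.span_induction with
  | mem x hx => exact h x hx
  | zero => simp
  | add x y _ _ hx hy => simp [add_dotProduct, hx, hy]
  | smul r x _ hx => simp [smul_dotProduct, hx]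


/-- A binary matrix is triorthogonal if every Schur (coordinatewise) product of two
distinct rows and of three pairwise distinct rows has even Hamming weight. -/
def Triorthogonal {m n : ℕ} (G : Matrix (Fin m) (Fin n) (ZMod 2)) : Prop :=
  (∀ i j : Fin m, i ≠ j → Even (hammingNorm (G i * G j))) ∧
  (∀ i j k : Fin m, i ≠ j → i ≠ k → j ≠ k → Even (hammingNorm (G i * G j * G k)))

/-- The Schur square `C^{⋆2}` of a binary linear code. -/
def schurSquare {n : ℕ} (C : Submodule (ZMod 2) (Fin n → ZMod 2)) :
    Submodule (ZMod 2) (Fin n → ZMod 2) :=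
  Submodule.span (ZMod 2) {x | ∃ c ∈ C, ∃ c' ∈ C, x = c * c'}

/-- The dual code `C^⊥`. -/
def dualCode {n : ℕ} (C : Submodule (ZMod 2) (Fin n → ZMod 2)) :
    Submodule (ZMod 2) (Fin n → ZMod 2) where
  carrier := {u | ∀ c ∈ C, dotProduct u c = 0}
  add_mem' := by
    intro a b ha hb c hc
    simp [add_dotProduct, ha c hc, hb c hc]
  zero_mem' := by
    intro c hc
    simp
  smul_mem' := by
    intro r a ha c hc
    simp [smul_dotProduct, ha c hc]

/-- A binary code is triorthogonal if it has a triorthogonal generator matrix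
(whose number of rows equals the dimension of the code). -/
def IsTriorthogonalCode {n : ℕ} (C : Submodule (ZMod 2) (Fin n → ZMod 2)) : Prop :=
  ∃ (m : ℕ) (G : Matrix (Fin m) (Fin n) (ZMod 2)), Triorthogonal G ∧
    Submodule.span (ZMod 2) (Set.range fun i => G i) = C ∧
    m = Module.finrank (ZMod 2) C

theorem stmt5 :
    let C : Submodule (ZMod 2) (Fin 5 → ZMod 2) :=
      Submodule.span (ZMod 2)
        {![1,1,0,0,0], ![0,1,1,0,0], ![0,0,0,1,1]}
    schurSquare C = C ⊔ dualCode C ∧ ¬ IsTriorthogonalCode C := by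
  intro C
  have ha : (![1,1,0,0,0] : Fin 5 → ZMod 2) ∈ C := Submodule.subset_span (by simp)
  have hb : (![0,1,1,0,0] : Fin 5 → ZMod 2) ∈ C := Submodule.subset_span (by simp)
  have hcc : (![0,0,0,1,1] : Fin 5 → ZMod 2) ∈ C := Submodule.subset_span (by simp)
  -- the vector d = 11100 is in the dual code
  have hd : (![1,1,1,0,0] : Fin 5 → ZMod 2) ∈ dualCode C := by
    show ∀ c ∈ C, dotProduct ![1,1,1,0,0] c = 0
    apply dot_span_zero
    rintro x (rfl | rfl | rfl) <;> decide
  -- every element of C is in schurSquare C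
  have hCss : ∀ x ∈ C, x ∈ schurSquare C := fun x hx =>
    Submodule.subset_span ⟨x, hx, x, hx, by funext i; exact (zmod2_mul_self (x i)).symm⟩
  constructor
  · -- schurSquare C = C ⊔ dualCode C
    apply le_antisymm
    · apply Submodule.span_le.2
      rintro x ⟨p, hp, q, hq, rfl⟩
      revert q
      induction hp using Submodule.span_induction with
      | mem x hx =>
        intro q hq
        induction hq using Submodule.span_induction with
        | mem y hy =>
          have hab2 : (![0,1,0,0,0] : Fin 5 → ZMod 2) ∈ C ⊔ dualCode C := by
            have he : (![0,1,0,0,0] : Fin 5 → ZMod 2) =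
                (![1,1,0,0,0] + ![0,1,1,0,0]) + ![1,1,1,0,0] := by decide
            rw [he]
            exact Submodule.add_mem _
              (Submodule.mem_sup_left (Submodule.add_mem _ ha hb))
              (Submodule.mem_sup_right hd)
          rcases hx with rfl | rfl | rfl <;> rcases hy with rfl | rfl | rfl
          · rw [(by decide : (![1,1,0,0,0] : Fin 5 → ZMod 2) * ![1,1,0,0,0] = ![1,1,0,0,0])]
            exact Submodule.mem_sup_left ha
          · rw [(by decide : (![1,1,0,0,0] : Fin 5 → ZMod 2) * ![0,1,1,0,0] = ![0,1,0,0,0])]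
            exact hab2
          · rw [(by decide : (![1,1,0,0,0] : Fin 5 → ZMod 2) * ![0,0,0,1,1] = 0)]
            exact Submodule.zero_mem _
          · rw [(by decide : (![0,1,1,0,0] : Fin 5 → ZMod 2) * ![1,1,0,0,0] = ![0,1,0,0,0])]
            exact hab2
          · rw [(by decide : (![0,1,1,0,0] : Fin 5 → ZMod 2) * ![0,1,1,0,0] = ![0,1,1,0,0])]
            exact Submodule.mem_sup_left hb
          · rw [(by decide : (![0,1,1,0,0] : Fin 5 → ZMod 2) * ![0,0,0,1,1] = 0)]
            exact Submodule.zero_mem _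
          · rw [(by decide : (![0,0,0,1,1] : Fin 5 → ZMod 2) * ![1,1,0,0,0] = 0)]
            exact Submodule.zero_mem _
          · rw [(by decide : (![0,0,0,1,1] : Fin 5 → ZMod 2) * ![0,1,1,0,0] = 0)]
            exact Submodule.zero_mem _
          · rw [(by decide : (![0,0,0,1,1] : Fin 5 → ZMod 2) * ![0,0,0,1,1] = ![0,0,0,1,1])]
            exact Submodule.mem_sup_left hcc
        | zero => simpa using Submodule.zero_mem _
        | add y z _ _ hy hz => rw [mul_add]; exact Submodule.add_mem _ hy hz
        | smul r y _ hy => rw [mul_smul_comm]; exact Submodule.smul_mem _ r hy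
      | zero => intro q hq; simpa using Submodule.zero_mem _
      | add y z _ _ hy hz => intro q hq; rw [add_mul]; exact Submodule.add_mem _ (hy q hq) (hz q hq)
      | smul r y _ hy => intro q hq; rw [smul_mul_assoc]; exact Submodule.smul_mem _ r (hy q hq)
    · apply sup_le
      · intro x hx; exact hCss x hx
      · intro u hu
        have hu' : ∀ c ∈ C, dotProduct u c = 0 := hu
        have h1 := hu' _ ha
        have h2 := hu' _ hb
        have h3 := hu' _ hcc
        have e1 : u 0 + u 1 = 0 := by
          simpa [dotProduct, Fin.sum_univ_five] using h1
        have e2 : u 1 + u 2 = 0 := by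
          simpa [dotProduct, Fin.sum_univ_five] using h2
        have e3 : u 3 + u 4 = 0 := by
          simpa [dotProduct, Fin.sum_univ_five] using h3
        have hz : ∀ s t : ZMod 2, s + t = 0 → t = s := by decide
        have hu1 : u 1 = u 0 := hz _ _ e1
        have hu2 : u 2 = u 1 := hz _ _ e2
        have hu4 : u 4 = u 3 := hz _ _ e3
        have hdec : u = u 0 • (![1,1,1,0,0] : Fin 5 → ZMod 2) + u 3 • ![0,0,0,1,1] := by
          funext i
          fin_cases i <;> simp [hu1, hu2, hu4, smul_eq_mul]
        rw [hdec]
        have hv : (![1,1,1,0,0] : Fin 5 → ZMod 2) ∈ schurSquare C := by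
          have : (![1,1,1,0,0] : Fin 5 → ZMod 2) =
              ![1,1,0,0,0] + ![0,1,1,0,0] + ![1,1,0,0,0] * ![0,1,1,0,0] := by decide
          rw [this]
          exact Submodule.add_mem _ (Submodule.add_mem _ (hCss _ ha) (hCss _ hb))
            (Submodule.subset_span ⟨_, ha, _, hb, rfl⟩)
        exact Submodule.add_mem _ (Submodule.smul_mem _ _ hv)
          (Submodule.smul_mem _ _ (hCss _ hcc))
  · rintro ⟨m, G, ⟨htri, -⟩, hspan, -⟩
    -- all-ones vector is orthogonal to C (every codeword has even weight)
    have hones : ∀ c ∈ C, dotProduct (fun _ => (1 : ZMod 2)) c = 0 := by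
      apply dot_span_zero
      rintro x (rfl | rfl | rfl) <;> decide
    have hrow : ∀ i, G i ∈ C := fun i => hspan ▸ Submodule.subset_span ⟨i, rfl⟩
    have hself : ∀ i, dotProduct (G i) (G i) = 0 := by
      intro i
      have : dotProduct (G i) (G i) =
          dotProduct (fun _ => (1 : ZMod 2)) (G i) := by
        simp only [dotProduct]
        exact Finset.sum_congr rfl fun j _ => by rw [zmod2_mul_self, one_mul]
      rw [this]
      exact hones _ (hrow i)
    have horth : ∀ i, ∀ c ∈ C, dotProduct (G i) c = 0 := by
      intro i
      rw [← hspan]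
      apply dot_span_zero
      rintro x ⟨j, rfl⟩
      by_cases hij : i = j
      · subst hij; exact hself i
      · exact dot_zero_of_even (htri i j hij)
    have hab : dotProduct (![1,1,0,0,0] : Fin 5 → ZMod 2) ![0,1,1,0,0] = 0 := by
      have hb' : ∀ c ∈ Submodule.span (ZMod 2) (Set.range fun i => G i),
          dotProduct c ![0,1,1,0,0] = 0 := by
        apply dot_span_zero_left
        rintro x ⟨i, rfl⟩
        exact horth i _ hb
      exact hb' _ (by rw [hspan]; exact ha)
    exact absurd hab (by decide)
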